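/- Let d ≥ 1 be an integer and q ≥ 0 a real number, and let f : ℝ × ℝ^d → ℂ be continuously differentiable on (ℝ × ℝ^d) ∖ {0} and positively homogeneous of degree −q, i.e., f(λ·x) = λ^{−q}·f(x) for every λ > 0 and every x ≠ 0. Set M = sup{ ‖Df(x)‖ : ‖x‖ = 1 }, where Df denotes the (Fréchet) derivative of f. Then there exists a constant C, depending only on q, such that for all t ∈ [0,1], all n, m ∈ ℤ, all real R ≥ 1, and all w ∈ ℝ^d with ‖w‖ = R: |f(t + n + m, w) − f(t + n, w)| ≤ C·M·(1 + m²)^{(q+2)/2}·(n² + R²)^{−(q+1)/2}. -/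

import Mathlib

noncomputable section

/-- `ℝ × ℝ^d` with the Euclidean norm `‖(t, w)‖ = (t² + ‖w‖²)^{1/2}`. -/
abbrev EucProd (d : ℕ) : Type := WithLp 2 (ℝ × EuclideanSpace ℝ (Fin d))

/-- The pair `(t, w)` viewed as an element of `ℝ × ℝ^d` with the Euclidean norm. -/
def pt {d : ℕ} (t : ℝ) (w : EuclideanSpace ℝ (Fin d)) : EucProd d :=
  (WithLp.equiv 2 (ℝ × EuclideanSpace ℝ (Fin d))).symm (t, w)

lemma pt_norm {d : ℕ} (s : ℝ) (w : EuclideanSpace ℝ (Fin d)) :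
    ‖pt s w‖ = Real.sqrt (s ^ 2 + ‖w‖ ^ 2) := by
  have h := WithLp.prod_norm_eq_of_L2 (pt s w)
  simpa [pt, Real.norm_eq_abs, sq_abs] using h

lemma pt_comb {d : ℕ} (a b θ : ℝ) (w : EuclideanSpace ℝ (Fin d)) :
    pt a w + θ • (pt b w - pt a w) = pt (a + θ * (b - a)) w := by
  apply (WithLp.equiv 2 (ℝ × EuclideanSpace ℝ (Fin d))).injective
  rw [Prod.ext_iff]
  constructor <;> simp [pt]

lemma pt_sub {d : ℕ} (a b : ℝ) (w : EuclideanSpace ℝ (Fin d)) :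
    pt a w - pt b w = pt (a - b) 0 := by
  apply (WithLp.equiv 2 (ℝ × EuclideanSpace ℝ (Fin d))).injective
  rw [Prod.ext_iff]; constructor <;> simp [pt]

lemma fderiv_homog_bound {d : ℕ} (q : ℝ) (f : EucProd d → ℂ)
    (hf : ContDiffOn ℝ 1 f {0}ᶜ)
    (hhom : ∀ l : ℝ, 0 < l → ∀ x : EucProd d, x ≠ 0 → f (l • x) = (l ^ (-q)) • f x)
    (M : ℝ) (hM : ∀ x : EucProd d, ‖x‖ = 1 → ‖fderiv ℝ f x‖ ≤ M)
    (x : EucProd d) (hx : x ≠ 0) :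
    ‖fderiv ℝ f x‖ ≤ M * ‖x‖ ^ (-(q + 1)) := by
  have hdiff : ∀ z : EucProd d, z ≠ 0 → DifferentiableAt ℝ f z := fun z hz =>
    (hf.differentiableOn one_ne_zero).differentiableAt
      (isOpen_compl_singleton.mem_nhds (by simpa using hz))
  set l : ℝ := ‖x‖ with hl_def
  have hl : 0 < l := norm_pos_iff.mpr hx
  set u : EucProd d := l⁻¹ • x with hu_def
  have hu1 : ‖u‖ = 1 := by
    rw [hu_def, norm_smul, norm_inv, Real.norm_eq_abs, abs_of_pos hl, ← hl_def,
      inv_mul_cancel₀ hl.ne']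
  have hu0 : u ≠ 0 := by
    intro h; rw [h] at hu1; simp at hu1
  have hlu : l • u = x := smul_inv_smul₀ hl.ne' x
  set T : EucProd d →L[ℝ] EucProd d := l • ContinuousLinearMap.id ℝ (EucProd d) with hT_def
  have hT : HasFDerivAt (fun y : EucProd d => l • y) T u := by
    convert T.hasFDerivAt using 1
    funext y; simp [hT_def]
  have h1 : HasFDerivAt (fun y : EucProd d => f (l • y)) ((fderiv ℝ f x).comp T) u := by
    have hfx : HasFDerivAt f (fderiv ℝ f x) (l • u) := by
      rw [hlu]; exact (hdiff x hx).hasFDerivAt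
    exact hfx.comp u hT
  have h2 : HasFDerivAt (fun y : EucProd d => (l ^ (-q) : ℝ) • f y)
      ((l ^ (-q) : ℝ) • fderiv ℝ f u) u := by
    have := ((hdiff u hu0).hasFDerivAt).const_smul (l ^ (-q) : ℝ); exact this
  have heq : (fun y : EucProd d => f (l • y)) =ᶠ[nhds u]
      (fun y : EucProd d => (l ^ (-q) : ℝ) • f y) :=
    Filter.eventually_of_mem (isOpen_compl_singleton.mem_nhds (by simpa using hu0))
      (fun y hy => hhom l hl y (by simpa using hy))
  have h3 : HasFDerivAt (fun y : EucProd d => f (l • y))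
      ((l ^ (-q) : ℝ) • fderiv ℝ f u) u := h2.congr_of_eventuallyEq heq
  have huniq : (fderiv ℝ f x).comp T = (l ^ (-q) : ℝ) • fderiv ℝ f u := h1.unique h3
  have hcomp : (fderiv ℝ f x).comp T = l • fderiv ℝ f x := by
    ext v
    simp [hT_def, map_smul]
  rw [hcomp] at huniq
  have hn : l * ‖fderiv ℝ f x‖ = l ^ (-q) * ‖fderiv ℝ f u‖ := by
    rw [← norm_smul_of_nonneg hl.le, ← norm_smul_of_nonneg (Real.rpow_pos_of_pos hl (-q)).le,
      huniq]
  have hbound : ‖fderiv ℝ f x‖ ≤ l ^ (-q) * M / l := by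
    rw [le_div_iff₀ hl, mul_comm]
    calc l * ‖fderiv ℝ f x‖ = l ^ (-q) * ‖fderiv ℝ f u‖ := hn
      _ ≤ l ^ (-q) * M := by
          exact mul_le_mul_of_nonneg_left (hM u hu1) (Real.rpow_pos_of_pos hl _).le
  calc ‖fderiv ℝ f x‖ ≤ l ^ (-q) * M / l := hbound
    _ = M * l ^ (-(q + 1)) := by
        rw [show -(q + 1) = -q + (-1) by ring, Real.rpow_add hl, Real.rpow_neg_one]
        field_simp

lemma scalar_ineq (t th nn mm R : ℝ) (ht0 : 0 ≤ t) (ht1 : t ≤ 1)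
    (hth0 : 0 ≤ th) (hth1 : th ≤ 1) (hR : 1 ≤ R) :
    nn ^ 2 + R ^ 2 ≤ ((t + nn + th * mm) ^ 2 + R ^ 2) * (4 * (1 + mm ^ 2)) := by
  set s : ℝ := t + nn + th * mm with hs
  have h1 : t ^ 2 ≤ 1 := by nlinarith
  have hth2 : th ^ 2 ≤ 1 := by nlinarith
  have h2 : (th * mm) ^ 2 ≤ mm ^ 2 := by
    nlinarith [mul_le_mul_of_nonneg_right hth2 (sq_nonneg mm)]
  have hR2 : (1 : ℝ) ≤ R ^ 2 := by nlinarith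
  have h4 : nn ^ 2 ≤ 3 * s ^ 2 + 3 * t ^ 2 + 3 * (th * mm) ^ 2 := by
    have hns : nn = s - t - th * mm := by rw [hs]; ring
    rw [hns]
    nlinarith [sq_nonneg (s + t), sq_nonneg (s + th * mm), sq_nonneg (t - th * mm)]
  have h5 : (0 : ℝ) ≤ (R ^ 2 - 1) * mm ^ 2 := mul_nonneg (by linarith) (sq_nonneg mm)
  have h6 : (0 : ℝ) ≤ mm ^ 2 * s ^ 2 := by positivity
  nlinarith [sq_nonneg s]

/-- scalar core of Lemma 3: there is `C > 0`, depending only on `q ≥ 0`,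
such that for every `d ≥ 1` and every `f : ℝ × ℝ^d → ℂ` which is `C¹` away from `0` and
positively homogeneous of degree `-q`, with `M` bounding `‖Df‖` on the unit sphere,
one has `|f(t+n+m, w) − f(t+n, w)| ≤ C M (1+m²)^{(q+2)/2} (n²+R²)^{-(q+1)/2}` for all
`t ∈ [0,1]`, `n, m ∈ ℤ`, `R ≥ 1` and `‖w‖ = R`. -/
theorem homogeneous_symbol_difference_estimate (q : ℝ) (hq : 0 ≤ q) :
    ∃ C : ℝ, 0 < C ∧ ∀ d : ℕ, 1 ≤ d → ∀ f : EucProd d → ℂ,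
      ContDiffOn ℝ 1 f {0}ᶜ →
      (∀ l : ℝ, 0 < l → ∀ x : EucProd d, x ≠ 0 → f (l • x) = (l ^ (-q)) • f x) →
      ∀ M : ℝ, (∀ x : EucProd d, ‖x‖ = 1 → ‖fderiv ℝ f x‖ ≤ M) →
      ∀ t : ℝ, t ∈ Set.Icc (0 : ℝ) 1 → ∀ n m : ℤ, ∀ R : ℝ, 1 ≤ R →
      ∀ w : EuclideanSpace ℝ (Fin d), ‖w‖ = R →
      ‖f (pt (t + n + m) w) - f (pt (t + n) w)‖ ≤
        C * M * (1 + (m : ℝ) ^ 2) ^ ((q + 2) / 2) *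
          ((n : ℝ) ^ 2 + R ^ 2) ^ (-(q + 1) / 2) := by
  refine ⟨2 ^ (q + 1), Real.rpow_pos_of_pos two_pos _, ?_⟩
  intro d hd f hf hhom M hM t ht n m R hR w hw
  have hR0 : (0 : ℝ) < R := lt_of_lt_of_le zero_lt_one hR
  have hR2 : (1 : ℝ) ≤ R ^ 2 := by nlinarith
  set nn : ℝ := (n : ℝ)
  set mm : ℝ := (m : ℝ)
  set A : ℝ := nn ^ 2 + R ^ 2 with hA_def
  set B : ℝ := 1 + mm ^ 2 with hB_def
  have hA : 0 < A := by positivity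
  have hB : 0 < B := by positivity
  set K : ℝ := A / (4 * B) with hK_def
  have hK : 0 < K := by positivity
  have hM0 : 0 ≤ M := le_trans (norm_nonneg _) (hM (pt 1 0) (by rw [pt_norm]; simp))
  set x0 : EucProd d := pt (t + nn) w with hx0_def
  set y0 : EucProd d := pt (t + nn + mm) w with hy0_def
  -- description of points of the segment
  have hseg : ∀ z ∈ segment ℝ x0 y0, Real.sqrt K ≤ ‖z‖ := by
    intro z hz
    rw [segment_eq_image'] at hz
    obtain ⟨θ, hθ, rfl⟩ := hz
    show Real.sqrt K ≤ ‖x0 + θ • (y0 - x0)‖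
    rw [hx0_def, hy0_def, pt_comb, show (t + nn + mm - (t + nn)) = mm by ring]
    set s : ℝ := t + nn + θ * mm with hs_def
    have hkey : K ≤ s ^ 2 + R ^ 2 := by
      rw [hK_def, div_le_iff₀ (by positivity), hA_def, hB_def, hs_def]
      exact scalar_ineq t θ nn mm R ht.1 ht.2 hθ.1 hθ.2 hR
    rw [pt_norm, hw]
    exact Real.sqrt_le_sqrt hkey
  have hsK : 0 < Real.sqrt K := Real.sqrt_pos.mpr hK
  have hne : ∀ z ∈ segment ℝ x0 y0, z ≠ 0 := by
    intro z hz h0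
    have := hseg z hz
    rw [h0, norm_zero] at this
    exact absurd this (not_le.mpr hsK)
  have hdiff : ∀ z ∈ segment ℝ x0 y0, DifferentiableAt ℝ f z := fun z hz =>
    (hf.differentiableOn one_ne_zero).differentiableAt
      (isOpen_compl_singleton.mem_nhds (by simpa using hne z hz))
  set D : ℝ := M * Real.sqrt K ^ (-(q + 1)) with hD_def
  have hbound : ∀ z ∈ segment ℝ x0 y0, ‖fderiv ℝ f z‖ ≤ D := by
    intro z hz
    calc ‖fderiv ℝ f z‖ ≤ M * ‖z‖ ^ (-(q + 1)) :=
          fderiv_homog_bound q f hf hhom M hM z (hne z hz)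
      _ ≤ D := by
          rw [hD_def]
          exact mul_le_mul_of_nonneg_left
            (Real.rpow_le_rpow_of_nonpos hsK (hseg z hz) (by linarith)) hM0
  have hmvt : ‖f y0 - f x0‖ ≤ D * ‖y0 - x0‖ :=
    (convex_segment x0 y0).norm_image_sub_le_of_norm_fderiv_le hdiff hbound
      (left_mem_segment ℝ x0 y0) (right_mem_segment ℝ x0 y0)
  have hsub : ‖y0 - x0‖ = |mm| := by
    rw [hy0_def, hx0_def, pt_sub, show (t + nn + mm - (t + nn)) = mm by ring, pt_norm]
    simp [Real.sqrt_sq_eq_abs]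
  have hmB : |mm| ≤ Real.sqrt B := by
    rw [← Real.sqrt_sq_eq_abs]
    exact Real.sqrt_le_sqrt (by rw [hB_def]; linarith)
  -- rpow algebra
  have e1 : Real.sqrt K ^ (-(q + 1)) = K ^ (-(q + 1) / 2) := by
    rw [Real.sqrt_eq_rpow, ← Real.rpow_mul hK.le]
    congr 1; ring
  have h4B : (0 : ℝ) < 4 * B := by positivity
  have e2 : K ^ (-(q + 1) / 2) = (4 * B) ^ ((q + 1) / 2) * A ^ (-(q + 1) / 2) := by
    rw [hK_def, Real.div_rpow hA.le h4B.le, div_eq_mul_inv, ← Real.rpow_neg h4B.le,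
      show -(-(q + 1) / 2) = (q + 1) / 2 by ring, mul_comm]
  have e3 : ((4 : ℝ) * B) ^ ((q + 1) / 2) = 2 ^ (q + 1) * B ^ ((q + 1) / 2) := by
    rw [Real.mul_rpow (by norm_num) hB.le]
    congr 1
    have h42 : (4 : ℝ) = (2 : ℝ) ^ (2 : ℝ) := by
      have : (2 : ℝ) ^ (2 : ℝ) = (2 : ℝ) ^ (2 : ℕ) := by
        rw [← Real.rpow_natCast (2 : ℝ) 2]; norm_num
      rw [this]; norm_num
    rw [h42, ← Real.rpow_mul (by norm_num : (0 : ℝ) ≤ 2),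
      show (2 : ℝ) * ((q + 1) / 2) = q + 1 by ring]
  have e4 : B ^ ((q + 1) / 2) * Real.sqrt B = B ^ ((q + 2) / 2) := by
    rw [Real.sqrt_eq_rpow, ← Real.rpow_add hB]
    congr 1; ring
  calc ‖f y0 - f x0‖ ≤ D * ‖y0 - x0‖ := hmvt
    _ ≤ D * Real.sqrt B := by
        rw [hsub]
        exact mul_le_mul_of_nonneg_left hmB (by positivity)
    _ = 2 ^ (q + 1) * M * B ^ ((q + 2) / 2) * A ^ (-(q + 1) / 2) := by
        rw [hD_def, e1, e2, e3, ← e4]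
        ring
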